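/- The function (X, Y) ↦ trace(Y* R Y X⁻¹) is jointly convex on the set of pairs (X, Y) with X Hermitian positive definite, for any Hermitian positive semidefinite R. -/

import Mathlib

open Matrix
open scoped ComplexOrder

lemma trace_re_nonneg {k : ℕ} {A : Matrix (Fin k) (Fin k) ℂ} (hA : A.PosSemidef) :
    0 ≤ A.trace.re := by
  rw [Matrix.trace]
  rw [Complex.re_sum]
  refine Finset.sum_nonneg fun i _ => ?_
  have := hA.re_dotProduct_nonneg (Pi.single i 1)
  simpa [dotProduct, Matrix.mulVec, Pi.single_apply, Matrix.diag] using this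

lemma trace_quad_nonneg {m n : ℕ} {R : Matrix (Fin m) (Fin m) ℂ} (hR : R.PosSemidef)
    {P : Matrix (Fin n) (Fin n) ℂ} (hP : P.PosSemidef) (A : Matrix (Fin m) (Fin n) ℂ) :
    0 ≤ ((Aᴴ * R * A * P).trace).re := by
  obtain ⟨S, rfl⟩ : ∃ S : Matrix (Fin m) (Fin m) ℂ, R = Sᴴ * S := by
    open scoped MatrixOrder in
    exact CStarAlgebra.nonneg_iff_eq_star_mul_self.mp hR.nonneg
  obtain ⟨Q, rfl⟩ : ∃ Q : Matrix (Fin n) (Fin n) ℂ, P = Qᴴ * Q := by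
    open scoped MatrixOrder in
    exact CStarAlgebra.nonneg_iff_eq_star_mul_self.mp hP.nonneg
  have h1 : (Aᴴ * (Sᴴ * S) * A * (Qᴴ * Q)).trace = ((S * A * Qᴴ)ᴴ * (S * A * Qᴴ)).trace := by
    rw [show Aᴴ * (Sᴴ * S) * A * (Qᴴ * Q) = (Aᴴ * Sᴴ * (S * A * Qᴴ)) * Q from by simp only [Matrix.mul_assoc],
        Matrix.trace_mul_comm]
    congr 1
    simp only [conjTranspose_mul, conjTranspose_conjTranspose]
    simp only [Matrix.mul_assoc]
  rw [h1]
  exact trace_re_nonneg (posSemidef_conjTranspose_mul_self _)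

lemma key_ineq {m n : ℕ} {R : Matrix (Fin m) (Fin m) ℂ} (hR : R.PosSemidef)
    {X : Matrix (Fin n) (Fin n) ℂ} (hX : X.PosDef) (Y W : Matrix (Fin m) (Fin n) ℂ) :
    2 * ((Wᴴ * R * Y).trace).re - ((Wᴴ * R * W * X).trace).re ≤ ((Yᴴ * R * Y * X⁻¹).trace).re := by
  have h0 := trace_quad_nonneg hR hX.inv.posSemidef (Y - W * X)
  have hu : IsUnit X.det := (isUnit_iff_isUnit_det _).mp hX.isUnit
  have hXi : X * X⁻¹ = 1 := Matrix.mul_nonsing_inv X hu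
  have hiX : X⁻¹ * X = 1 := Matrix.nonsing_inv_mul X hu
  have hXh : Xᴴ = X := hX.isHermitian.eq
  have expand : (Y - W * X)ᴴ * R * (Y - W * X) * X⁻¹
      = Yᴴ * R * Y * X⁻¹ - Yᴴ * R * W - X * (Wᴴ * R * Y) * X⁻¹
        + X * (Wᴴ * R * W) * X * X⁻¹ := by
    simp only [conjTranspose_sub, conjTranspose_mul, hXh, Matrix.sub_mul, Matrix.mul_sub]
    rw [show Yᴴ * R * (W * X) * X⁻¹ = Yᴴ * R * W * (X * X⁻¹) from by
      simp only [Matrix.mul_assoc], hXi, Matrix.mul_one]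
    simp only [Matrix.mul_assoc]
    abel
  rw [expand] at h0
  simp only [Matrix.trace_sub, Matrix.trace_add, Complex.add_re, Complex.sub_re] at h0
  have t2 : ((Yᴴ * R * W).trace).re = ((Wᴴ * R * Y).trace).re := by
    have e : Yᴴ * R * W = (Wᴴ * R * Y)ᴴ := by
      simp only [conjTranspose_mul, conjTranspose_conjTranspose, hR.1.eq, Matrix.mul_assoc]
    rw [e, Matrix.trace_conjTranspose]
    simp
  have t3 : (X * (Wᴴ * R * Y) * X⁻¹).trace = (Wᴴ * R * Y).trace := by
    rw [Matrix.trace_mul_cycle, ← Matrix.mul_assoc, hiX, Matrix.one_mul]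
  have t4 : (X * (Wᴴ * R * W) * X * X⁻¹).trace = (Wᴴ * R * W * X).trace := by
    rw [Matrix.mul_assoc, Matrix.mul_assoc, Matrix.mul_assoc, hXi, Matrix.mul_one,
      Matrix.trace_mul_comm]
  rw [t2, t3, t4] at h0
  linarith

lemma posDef_smul {n : ℕ} {M : Matrix (Fin n) (Fin n) ℂ} (hM : M.PosDef) {a : ℝ} (ha : 0 < a) :
    (a • M).PosDef := by
  have h1 : a • M = (a : ℂ) • M := by ext i j; simp [Complex.real_smul]
  rw [h1]
  constructor
  · rw [Matrix.IsHermitian, Matrix.conjTranspose_smul, hM.1.eq]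
    congr 1
    simp
  · intro x hx
    exact (hM.smul (show (0:ℂ) < a by exact_mod_cast ha)).2 hx

lemma eq_at {m n : ℕ} (R : Matrix (Fin m) (Fin m) ℂ)
    {X : Matrix (Fin n) (Fin n) ℂ} (hX : X.PosDef) (Y : Matrix (Fin m) (Fin n) ℂ) :
    ((Yᴴ * R * Y * X⁻¹).trace).re
      = 2 * (((Y * X⁻¹)ᴴ * R * Y).trace).re - (((Y * X⁻¹)ᴴ * R * (Y * X⁻¹) * X).trace).re := by
  have hu : IsUnit X.det := (isUnit_iff_isUnit_det _).mp hX.isUnit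
  have hiX : X⁻¹ * X = 1 := Matrix.nonsing_inv_mul X hu
  have hWh : (Y * X⁻¹)ᴴ = X⁻¹ * Yᴴ := by
    rw [Matrix.conjTranspose_mul, Matrix.conjTranspose_nonsing_inv, hX.isHermitian.eq]
  have ta : ((Y * X⁻¹)ᴴ * R * Y).trace = (Yᴴ * R * Y * X⁻¹).trace := by
    rw [hWh, show X⁻¹ * Yᴴ * R * Y = X⁻¹ * (Yᴴ * R * Y) from by simp only [Matrix.mul_assoc],
      Matrix.trace_mul_comm]
  have tb : ((Y * X⁻¹)ᴴ * R * (Y * X⁻¹) * X).trace = (Yᴴ * R * Y * X⁻¹).trace := by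
    rw [hWh, show X⁻¹ * Yᴴ * R * (Y * X⁻¹) * X = X⁻¹ * (Yᴴ * R * Y) * (X⁻¹ * X) from by
      simp only [Matrix.mul_assoc], hiX, Matrix.mul_one, Matrix.trace_mul_comm]
  rw [ta, tb]
  ring

lemma combo_posDef {n : ℕ} {X₁ X₂ : Matrix (Fin n) (Fin n) ℂ} (h1 : X₁.PosDef) (h2 : X₂.PosDef)
    {a b : ℝ} (ha : 0 ≤ a) (hb : 0 ≤ b) (hab : a + b = 1) : (a • X₁ + b • X₂).PosDef := by
  rcases eq_or_lt_of_le ha with ha0 | ha0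
  · have hb1 : b = 1 := by linarith
    simpa [← ha0, hb1] using h2
  · rcases eq_or_lt_of_le hb with hb0 | hb0
    · have ha1 : a = 1 := by linarith
      simpa [← hb0, ha1] using h1
    · exact (posDef_smul h1 ha0).add (posDef_smul h2 hb0)

theorem stmt5 {m n : ℕ} (R : Matrix (Fin m) (Fin m) ℂ) (hR : R.PosSemidef) :
    ConvexOn ℝ {p : Matrix (Fin n) (Fin n) ℂ × Matrix (Fin m) (Fin n) ℂ | p.1.PosDef}
      (fun p => ((p.2ᴴ * R * p.2 * p.1⁻¹).trace).re) := by
  constructor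
  · intro p hp q hq a b ha hb hab
    simp only [Set.mem_setOf_eq] at *
    exact combo_posDef hp hq ha hb hab
  · intro p hp q hq a b ha hb hab
    simp only [Set.mem_setOf_eq] at hp hq
    set Xc : Matrix (Fin n) (Fin n) ℂ := a • p.1 + b • q.1 with hXc
    set Yc : Matrix (Fin m) (Fin n) ℂ := a • p.2 + b • q.2 with hYc
    have hXcp : Xc.PosDef := combo_posDef hp hq ha hb hab
    set W : Matrix (Fin m) (Fin n) ℂ := Yc * Xc⁻¹ with hW
    have h1 : (a • p + b • q).1 = Xc := rfl
    have h2 : (a • p + b • q).2 = Yc := rfl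
    simp only [smul_eq_mul, h1, h2]
    rw [eq_at R hXcp Yc, ← hW]
    have lin2 : ((Wᴴ * R * Yc).trace).re
        = a * ((Wᴴ * R * p.2).trace).re + b * ((Wᴴ * R * q.2).trace).re := by
      rw [hYc, Matrix.mul_add, Matrix.mul_smul, Matrix.mul_smul, Matrix.trace_add,
        Matrix.trace_smul, Matrix.trace_smul]
      simp [Complex.smul_re]
    have lin1 : ((Wᴴ * R * W * Xc).trace).re
        = a * ((Wᴴ * R * W * p.1).trace).re + b * ((Wᴴ * R * W * q.1).trace).re := by
      rw [hXc, Matrix.mul_add, Matrix.mul_smul, Matrix.mul_smul, Matrix.trace_add,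
        Matrix.trace_smul, Matrix.trace_smul]
      simp [Complex.smul_re]
    rw [lin1, lin2]
    have k1 := key_ineq hR hp p.2 W
    have k2 := key_ineq hR hq q.2 W
    have m1 := mul_le_mul_of_nonneg_left k1 ha
    have m2 := mul_le_mul_of_nonneg_left k2 hb
    nlinarith [m1, m2]
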